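/- Let τ > 0, let g : ℝ → ℝ be odd, nondecreasing, and continuous, let G(s) := ∫₀ˢ g(r) dr, and suppose α₁, α₂ > 0 satisfy α₁ s g(s) ≤ G(s) ≤ α₂ s g(s) for all s ∈ ℝ. Let z : [0, 1] × ℝ → ℝ be continuously differentiable and satisfy τ ∂_t z + ∂_ϱ z = 0 on [0,1] × ℝ, and set Υ(t) := ∫₀¹ e^{−2τϱ} G(z(ϱ, t)) dϱ. Then for every t ∈ ℝ, Υ'(t) ≤ −2 Υ(t) + (α₂/τ) z(0, t) g(z(0, t)) − (α₁ e^{−2τ}/τ) z(1, t) g(z(1, t)). -/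

import Mathlib

open MeasureTheory intervalIntegral Real

/-- Differential inequality for `Υ(t) = ∫₀¹ e^{−2τϱ} G(z(ϱ,t)) dϱ`:
`Υ'(t) ≤ −2Υ(t) + (α₂/τ) z(0,t) g(z(0,t)) − (α₁ e^{−2τ}/τ) z(1,t) g(z(1,t))`. -/
theorem stmt_13 (τ : ℝ) (hτ : 0 < τ)
    (g : ℝ → ℝ) (hodd : ∀ s, g (-s) = -g s) (hmono : Monotone g)
    (hcont : Continuous g)
    (G : ℝ → ℝ) (hG : ∀ s, G s = ∫ r in (0:ℝ)..s, g r)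
    (α₁ α₂ : ℝ) (hα₁ : 0 < α₁) (hα₂ : 0 < α₂)
    (hlow : ∀ s, α₁ * (s * g s) ≤ G s) (hupp : ∀ s, G s ≤ α₂ * (s * g s))
    (z : ℝ → ℝ → ℝ) (hz : ContDiff ℝ 1 fun q : ℝ × ℝ => z q.1 q.2)
    (hpde : ∀ ϱ ∈ Set.Icc (0:ℝ) 1, ∀ t : ℝ,
      τ * deriv (fun t' => z ϱ t') t + deriv (fun ϱ' => z ϱ' t) ϱ = 0)
    (Υ : ℝ → ℝ)
    (hΥ : ∀ r : ℝ, Υ r = ∫ ϱ in (0:ℝ)..1, Real.exp (-2 * τ * ϱ) * G (z ϱ r))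
    (t : ℝ) :
    deriv Υ t
      ≤ -2 * Υ t + (α₂ / τ) * (z 0 t * g (z 0 t))
        - (α₁ * Real.exp (-2 * τ) / τ) * (z 1 t * g (z 1 t)) := by
  have hFd : Differentiable ℝ (fun q : ℝ × ℝ => z q.1 q.2) := hz.differentiable one_ne_zero
  set F : ℝ × ℝ → ℝ := fun q => z q.1 q.2 with hF
  -- partial derivatives
  have hd1 : ∀ ϱ s : ℝ, HasDerivAt (fun ϱ' => z ϱ' s) (fderiv ℝ F (ϱ, s) (1, 0)) ϱ := by
    intro ϱ s
    have h1 : HasDerivAt (fun ϱ' : ℝ => ((ϱ', s) : ℝ × ℝ)) (1, 0) ϱ :=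
      (hasDerivAt_id ϱ).prodMk (hasDerivAt_const ϱ s)
    exact (hFd (ϱ, s)).hasFDerivAt.comp_hasDerivAt ϱ h1
  have hd2 : ∀ ϱ s : ℝ, HasDerivAt (fun s' => z ϱ s') (fderiv ℝ F (ϱ, s) (0, 1)) s := by
    intro ϱ s
    have h1 : HasDerivAt (fun s' : ℝ => ((ϱ, s') : ℝ × ℝ)) (0, 1) s :=
      (hasDerivAt_const s ϱ).prodMk (hasDerivAt_id s)
    exact (hFd (ϱ, s)).hasFDerivAt.comp_hasDerivAt s h1
  -- characteristics : z ϱ s = z 0 (s - τ ϱ)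
  have hchar : ∀ ϱ ∈ Set.Icc (0:ℝ) 1, ∀ s : ℝ, z ϱ s = z 0 (s - τ * ϱ) := by
    intro ϱ hϱ s
    rcases eq_or_lt_of_le hϱ.1 with h0 | h0
    · rw [← h0]; norm_num
    · set c := s - τ * ϱ with hc
      set h : ℝ → ℝ := fun x => z x (c + τ * x) with hh
      have hder : ∀ x : ℝ, HasDerivAt h (fderiv ℝ F (x, c + τ * x) (1, τ)) x := by
        intro x
        have h2 : HasDerivAt (fun x : ℝ => c + τ * x) τ x := by
          exact ((hasDerivAt_const x c).add ((hasDerivAt_id x).const_mul τ)).congr_deriv (by simp)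
        have h1 : HasDerivAt (fun x : ℝ => ((x, c + τ * x) : ℝ × ℝ)) ((1:ℝ), τ) x :=
          (hasDerivAt_id x).prodMk h2
        exact (hFd _).hasFDerivAt.comp_hasDerivAt x h1
      have hzero : ∀ x ∈ Set.Ico (0:ℝ) ϱ, deriv h x = 0 := by
        intro x hx
        have hx1 : x ∈ Set.Icc (0:ℝ) 1 := ⟨hx.1, hx.2.le.trans hϱ.2⟩
        have e1 := (hd1 x (c + τ * x)).deriv
        have e2 := (hd2 x (c + τ * x)).deriv
        have hp := hpde x hx1 (c + τ * x)
        rw [e1, e2] at hp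
        have h11 : ((1:ℝ), τ) = ((1:ℝ), (0:ℝ)) + τ • ((0:ℝ), (1:ℝ)) := by
          simp [Prod.ext_iff]
        rw [(hder x).deriv, h11, map_add, ContinuousLinearMap.map_smul]
        simp only [smul_eq_mul]
        linarith
      have hconst := constant_of_derivWithin_zero (a := 0) (b := ϱ)
        (f := h) (fun x _ => (hder x).differentiableAt.differentiableWithinAt)
        (fun x hx => by
          rw [(hder x).differentiableAt.derivWithin (uniqueDiffOn_Icc h0 x ⟨hx.1, hx.2.le⟩)]
          exact hzero x hx)
      have := hconst ϱ ⟨hϱ.1, le_rfl⟩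
      simpa [hh, hc] using this
  -- continuity facts
  have hGd : ∀ s : ℝ, HasDerivAt G (g s) s := by
    intro s
    have := (hcont.integral_hasStrictDerivAt 0 s).hasDerivAt
    have heq : G = fun u => ∫ r in (0:ℝ)..u, g r := funext hG
    rw [heq]; exact this
  have hGc : Continuous G := by
    have : Differentiable ℝ G := fun s => (hGd s).differentiableAt
    exact this.continuous
  have hzc : Continuous fun u : ℝ => z 0 u := by
    have : Continuous fun u : ℝ => F (0, u) := hz.continuous.comp (by fun_prop)
    simpa [hF] using this
  set φ : ℝ → ℝ := fun u => Real.exp (2 * u) * G (z 0 u) with hφ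
  have hφc : Continuous φ := by
    apply Continuous.mul
    · fun_prop
    · exact hGc.comp hzc
  -- rewrite Υ
  have hΥ2 : ∀ r : ℝ, Υ r = Real.exp (-2 * r) * τ⁻¹ * ∫ u in (r - τ)..r, φ u := by
    intro r
    rw [hΥ r]
    have hcongr : (∫ ϱ in (0:ℝ)..1, Real.exp (-2 * τ * ϱ) * G (z ϱ r))
        = ∫ ϱ in (0:ℝ)..1, Real.exp (-2 * r) * φ (r + (-τ) * ϱ) := by
      apply intervalIntegral.integral_congr
      intro ϱ hϱ
      have hϱ' : ϱ ∈ Set.Icc (0:ℝ) 1 := by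
        simpa [Set.uIcc_of_le (by norm_num : (0:ℝ) ≤ 1)] using hϱ
      show Real.exp (-2 * τ * ϱ) * G (z ϱ r) = Real.exp (-2 * r) * φ (r + -τ * ϱ)
      rw [hchar ϱ hϱ' r]
      simp only [hφ]
      rw [show r + (-τ) * ϱ = r - τ * ϱ by ring]
      have he : Real.exp (-2 * r) * Real.exp (2 * (r - τ * ϱ)) = Real.exp (-2 * τ * ϱ) := by
        rw [← Real.exp_add]; ring_nf
      rw [← he]; ring
    rw [hcongr, intervalIntegral.integral_const_mul,
      intervalIntegral.integral_comp_add_mul φ (by linarith : (-τ) ≠ 0)]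
    have : r + -τ * 1 = r - τ := by ring
    rw [this]
    have : r + -τ * 0 = r := by ring
    rw [this]
    rw [intervalIntegral.integral_symm]
    simp only [smul_eq_mul]
    field_simp
  -- derivative of Υ
  set A : ℝ → ℝ := fun u => ∫ x in (0:ℝ)..u, φ x with hA
  have hAd : ∀ u : ℝ, HasDerivAt A (φ u) u := fun u =>
    (hφc.integral_hasStrictDerivAt 0 u).hasDerivAt
  have hΨ : ∀ r : ℝ, (∫ u in (r - τ)..r, φ u) = A r - A (r - τ) := by
    intro r
    rw [hA]
    rw [← intervalIntegral.integral_interval_sub_left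
      (hφc.intervalIntegrable 0 r) (hφc.intervalIntegrable 0 (r - τ))]
  have hΥd : HasDerivAt Υ
      (-2 * Υ t + τ⁻¹ * φ t * Real.exp (-2 * t) - τ⁻¹ * φ (t - τ) * Real.exp (-2 * t)) t := by
    have hΥ3 : Υ = fun r => Real.exp (-2 * r) * τ⁻¹ * (A r - A (r - τ)) := by
      funext r; rw [hΥ2 r, hΨ r]
    rw [hΥ3]
    have hexp : HasDerivAt (fun r : ℝ => Real.exp (-2 * r)) (-2 * Real.exp (-2 * t)) t := by
      have h1 : HasDerivAt (fun r : ℝ => -2 * r) (-2 : ℝ) t := by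
        simpa using (hasDerivAt_id t).const_mul (-2 : ℝ)
      simpa [mul_comm] using h1.exp
    have hA2 : HasDerivAt (fun r : ℝ => A r - A (r - τ)) (φ t - φ (t - τ)) t := by
      have h1 : HasDerivAt (fun r : ℝ => A (r - τ)) (φ (t - τ)) t := by
        have hin : HasDerivAt (fun r : ℝ => r - τ) 1 t := by
          simpa using (hasDerivAt_id t).sub_const τ
        have := (hAd (t - τ)).comp t hin
        exact this.congr_deriv (mul_one _)
      exact (hAd t).sub h1
    have := (hexp.mul_const τ⁻¹).mul hA2
    refine this.congr_deriv ?_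
    beta_reduce
    ring
  rw [hΥd.deriv]
  -- final estimate
  have hz1 : z 1 t = z 0 (t - τ) := by
    have := hchar 1 ⟨by norm_num, le_rfl⟩ t
    simpa using this
  have hφt : τ⁻¹ * φ t * Real.exp (-2 * t) = τ⁻¹ * G (z 0 t) := by
    rw [hφ]
    simp only
    rw [show τ⁻¹ * (Real.exp (2 * t) * G (z 0 t)) * Real.exp (-2 * t)
      = τ⁻¹ * G (z 0 t) * (Real.exp (2 * t) * Real.exp (-2 * t)) by ring,
      ← Real.exp_add]
    norm_num
  have hφt2 : τ⁻¹ * φ (t - τ) * Real.exp (-2 * t)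
      = τ⁻¹ * Real.exp (-2 * τ) * G (z 1 t) := by
    rw [hφ, hz1]
    simp only
    rw [show τ⁻¹ * (Real.exp (2 * (t - τ)) * G (z 0 (t - τ))) * Real.exp (-2 * t)
      = τ⁻¹ * G (z 0 (t - τ)) * (Real.exp (2 * (t - τ)) * Real.exp (-2 * t)) by ring,
      ← Real.exp_add]
    ring_nf
  rw [hφt, hφt2]
  have h1 : τ⁻¹ * G (z 0 t) ≤ (α₂ / τ) * (z 0 t * g (z 0 t)) := by
    have := hupp (z 0 t)
    rw [div_eq_mul_inv]
    nlinarith [inv_pos.mpr hτ]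
  have h2 : (α₁ * Real.exp (-2 * τ) / τ) * (z 1 t * g (z 1 t))
      ≤ τ⁻¹ * Real.exp (-2 * τ) * G (z 1 t) := by
    have he : (0:ℝ) < Real.exp (-2 * τ) := Real.exp_pos _
    have hpos : (0:ℝ) ≤ Real.exp (-2 * τ) * τ⁻¹ := le_of_lt (mul_pos he (inv_pos.mpr hτ))
    have hm := mul_le_mul_of_nonneg_left (hlow (z 1 t)) hpos
    rw [div_eq_mul_inv]
    nlinarith [hm]
  linarith
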